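/- arXiv:0801.3691 — 5 statements merged into one kernel-verified Lean document; each statement's English description precedes it below -/
import Mathlib

section
/- As x → 0 from the right, arsinh(1/sinh(x/2)) = −log x + 2·log 2 + O(x²); precisely, the function x ↦ Real.arsinh (1 / Real.sinh (x/2)) − (−Real.log x + 2·Real.log 2) is big-O of x ↦ x² along the filter nhdsWithin 0 (Set.Ioi 0) on ℝ. -/
open Asymptotics

lemma sinhcosh_bounds {t : ℝ} (h0 : 0 < t) (h1 : t ≤ 1) :
    Real.sinh t ≤ t * Real.cosh t ∧ t * Real.cosh t ≤ (1 + t ^ 2) * Real.sinh t := by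
  have habs : |t| ≤ 1 := by rw [abs_of_pos h0]; exact h1
  have habs' : |(-t)| ≤ 1 := by rwa [abs_neg]
  have hE := Real.exp_bound habs (n := 4) (by norm_num)
  have hF := Real.exp_bound habs' (n := 4) (by norm_num)
  rw [abs_of_pos h0] at hE
  rw [abs_neg, abs_of_pos h0] at hF
  norm_num [Finset.sum_range_succ, Nat.factorial, abs_sub_le_iff] at hE hF
  obtain ⟨hE1, hE2⟩ := hE
  obtain ⟨hF1, hF2⟩ := hF
  have e1 : Real.exp t ≤ 1 + t + t ^ 2 / 2 + t ^ 3 / 6 + 5 / 96 * t ^ 4 := by linarith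
  have e2 : 1 + t + t ^ 2 / 2 + t ^ 3 / 6 - 5 / 96 * t ^ 4 ≤ Real.exp t := by linarith
  have f1 : Real.exp (-t) ≤ 1 - t + t ^ 2 / 2 - t ^ 3 / 6 + 5 / 96 * t ^ 4 := by linarith
  have f2 : 1 - t + t ^ 2 / 2 - t ^ 3 / 6 - 5 / 96 * t ^ 4 ≤ Real.exp (-t) := by linarith
  have ht3 : 0 < t ^ 3 := by positivity
  have ht4 : t ^ 4 ≤ t ^ 3 := by nlinarith
  have ht6 : t ^ 6 ≤ t ^ 3 := by nlinarith [sq_nonneg t, pow_pos h0 4]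
  have ht5 : 0 ≤ t ^ 5 := by positivity
  rw [Real.sinh_eq, Real.cosh_eq]
  constructor
  · nlinarith [mul_le_mul_of_nonneg_left f2 (by linarith : (0:ℝ) ≤ 1 + t),
      mul_le_mul_of_nonneg_left e1 (by linarith : (0:ℝ) ≤ 1 - t)]
  · nlinarith [mul_le_mul_of_nonneg_left e2 (by nlinarith : (0:ℝ) ≤ 1 + t ^ 2 - t),
      mul_le_mul_of_nonneg_left f1 (by positivity : (0:ℝ) ≤ 1 + t ^ 2 + t)]

/-- As `x → 0⁺`, `arsinh (1 / sinh (x/2)) = -log x + 2 log 2 + O(x²)`. -/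
theorem arsinh_one_div_sinh_asymptotic :
    (fun x : ℝ => Real.arsinh (1 / Real.sinh (x / 2)) - (-Real.log x + 2 * Real.log 2))
      =O[nhdsWithin 0 (Set.Ioi 0)] fun x : ℝ => x ^ 2 := by
  rw [isBigO_iff]
  refine ⟨1, ?_⟩
  filter_upwards [Ioo_mem_nhdsGT_of_mem (Set.mem_Ico.2 ⟨le_refl (0:ℝ), one_pos⟩)] with x hx
  obtain ⟨hx0, hx1⟩ := hx
  set t := x / 4 with ht
  have ht0 : 0 < t := by positivity
  have ht1 : t ≤ 1 := by rw [ht]; linarith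
  have hsinh : 0 < Real.sinh t := Real.sinh_pos_iff.2 ht0
  have hcosh : 0 < Real.cosh t := Real.cosh_pos t
  have hx2 : x / 2 = 2 * t := by rw [ht]; ring
  have hs2 : Real.sinh (x / 2) = 2 * Real.sinh t * Real.cosh t := by
    rw [hx2, Real.sinh_two_mul]
  have hs2pos : 0 < Real.sinh (x / 2) := by rw [hs2]; positivity
  have hsqrt : Real.sqrt (1 + (1 / Real.sinh (x / 2)) ^ 2)
      = Real.cosh (x / 2) / Real.sinh (x / 2) := by
    rw [show (1 : ℝ) + (1 / Real.sinh (x / 2)) ^ 2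
        = (Real.cosh (x / 2) / Real.sinh (x / 2)) ^ 2 by
      have hc := Real.cosh_sq (x / 2)
      field_simp
      linarith]
    exact Real.sqrt_sq (by positivity)
  have harsinh : Real.arsinh (1 / Real.sinh (x / 2))
      = Real.log (Real.cosh t / Real.sinh t) := by
    rw [Real.arsinh, hsqrt]
    congr 1
    rw [hx2, Real.cosh_two_mul]
    have hc := Real.cosh_sq t
    rw [Real.sinh_two_mul]
    field_simp
    nlinarith [hc]
  have hlogx : Real.log x = Real.log 4 + Real.log t := by
    rw [ht, show x = 4 * (x / 4) by ring]
    rw [Real.log_mul (by norm_num) (by positivity)]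
    norm_num
  have hexpr : Real.arsinh (1 / Real.sinh (x / 2)) - (-Real.log x + 2 * Real.log 2)
      = Real.log (t * Real.cosh t / Real.sinh t) := by
    rw [harsinh, hlogx]
    have h4 : Real.log 4 = 2 * Real.log 2 := by
      rw [show (4:ℝ) = 2 ^ 2 by norm_num, Real.log_pow]; push_cast; ring
    rw [show t * Real.cosh t / Real.sinh t = t * (Real.cosh t / Real.sinh t) by ring,
        Real.log_mul ht0.ne' (by positivity), h4]
    ring
  obtain ⟨hb1, hb2⟩ := sinhcosh_bounds ht0 ht1
  have hr1 : 1 ≤ t * Real.cosh t / Real.sinh t := (one_le_div hsinh).2 hb1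
  have hr2 : t * Real.cosh t / Real.sinh t ≤ 1 + t ^ 2 := by
    rw [div_le_iff₀ hsinh]; linarith
  have hlog0 : 0 ≤ Real.log (t * Real.cosh t / Real.sinh t) := Real.log_nonneg hr1
  have hlog1 : Real.log (t * Real.cosh t / Real.sinh t) ≤ t ^ 2 := by
    calc Real.log (t * Real.cosh t / Real.sinh t) ≤ t * Real.cosh t / Real.sinh t - 1 :=
      Real.log_le_sub_one_of_pos (by positivity)
    _ ≤ t ^ 2 := by linarith
  rw [hexpr]
  rw [Real.norm_eq_abs, Real.norm_eq_abs, abs_of_nonneg hlog0, abs_of_nonneg (by positivity)]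
  have : t ^ 2 ≤ x ^ 2 := by rw [ht]; nlinarith
  linarith
end

section
/- For every w ∈ ℍ with −1/2 ≤ re w ≤ 1/2 and im w ≤ 1, the hyperbolic distance from w to the horocycle segment h satisfies Metric.infDist w h = −Real.log (im w); equivalently, im w = Real.exp (−Metric.infDist w h). -/
open scoped UpperHalfPlane
open UpperHalfPlane

/-- The horocycle segment `h ⊆ ℍ`: points with `-1/2 ≤ re < 1/2` and `im = 1`. -/
def horocycle : Set ℍ := {w : ℍ | -(1 / 2) ≤ w.re ∧ w.re < 1 / 2 ∧ w.im = 1}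

lemma mem_closure_horocycle (w : ℍ) (h₁ : -(1 / 2) ≤ w.re) (h₂ : w.re ≤ 1 / 2)
    (hv : w.im = 1) : w ∈ closure horocycle := by
  rcases lt_or_eq_of_le h₂ with h | h
  · exact subset_closure ⟨h₁, h, hv⟩
  · apply mem_closure_iff_seq_limit.2
    refine ⟨fun n => UpperHalfPlane.mk ⟨w.re - 1 / (n + 1), 1⟩ one_pos, fun n => ?_, ?_⟩
    · refine ⟨?_, ?_, rfl⟩
      · show -(1/2) ≤ w.re - 1/(n+1)
        rw [h]
        have h1 : (1:ℝ) / (n + 1) ≤ 1 := by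
          rw [div_le_one (by positivity)]; linarith [Nat.cast_nonneg (α := ℝ) n]
        linarith
      · show w.re - 1/(n+1) < 1/2
        have : (0:ℝ) < 1 / (n + 1) := by positivity
        linarith
    · rw [UpperHalfPlane.isEmbedding_coe.tendsto_nhds_iff]
      have h0 : Filter.Tendsto (fun n : ℕ => 1 / ((n : ℝ) + 1)) Filter.atTop (nhds 0) :=
        tendsto_one_div_add_atTop_nhds_zero_nat
      have h1 := (Complex.continuous_ofReal.tendsto 0).comp h0
      have h2 := (tendsto_const_nhds
        (x := (⟨w.re, 1⟩ : ℂ)) (f := Filter.atTop (α := ℕ))).sub h1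
      rw [Complex.ofReal_zero, sub_zero] at h2
      have hw : (w : ℂ) = ⟨w.re, 1⟩ := Complex.ext rfl hv
      simp only [Function.comp_def]
      rw [hw]
      exact h2.congr fun n => Complex.ext
        (by simp only [Function.comp_apply, Complex.sub_re, Complex.ofReal_re, UpperHalfPlane.coe_mk])
        (by simp only [Function.comp_apply, Complex.sub_im, Complex.ofReal_im, sub_zero, UpperHalfPlane.coe_mk])

/-- For `w ∈ ℍ` with `-1/2 ≤ re w ≤ 1/2` and `im w ≤ 1`, the hyperbolic distance from `w`
to the horocycle segment `h` is `-log (im w)`; equivalently `im w = exp (-infDist w h)`. -/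
theorem infDist_horocycle_eq (w : ℍ) (h₁ : -(1 / 2) ≤ w.re) (h₂ : w.re ≤ 1 / 2)
    (h₃ : w.im ≤ 1) :
    Metric.infDist w horocycle = -Real.log w.im ∧
      w.im = Real.exp (-(Metric.infDist w horocycle)) := by
  have hlog : Real.log w.im ≤ 0 := Real.log_nonpos w.im_pos.le h₃
  have hne : horocycle.Nonempty :=
    ⟨UpperHalfPlane.mk ⟨0, 1⟩ one_pos, by norm_num, by norm_num, rfl⟩
  have key : Metric.infDist w horocycle = -Real.log w.im := by
    apply le_antisymm
    · -- upper bound via point (re w, 1) in closure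
      set v : ℍ := UpperHalfPlane.mk ⟨w.re, 1⟩ one_pos with hv
      have hvcl : v ∈ closure horocycle :=
        mem_closure_horocycle v h₁ h₂ rfl
      have hre : w.re = v.re := rfl
      calc Metric.infDist w horocycle = Metric.infDist w (closure horocycle) :=
            (Metric.infDist_closure).symm
        _ ≤ dist w v := Metric.infDist_le_dist_of_mem hvcl
        _ = -Real.log w.im := by
            rw [UpperHalfPlane.dist_of_re_eq hre]
            show |Real.log w.im - Real.log v.im| = _
            have : v.im = 1 := rfl
            rw [this, Real.log_one, sub_zero, abs_of_nonpos hlog]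
    · by_contra hc
      push_neg at hc
      obtain ⟨v, hv, hd⟩ := (Metric.infDist_lt_iff hne).1 hc
      have := UpperHalfPlane.dist_log_im_le w v
      rw [hv.2.2, Real.log_one, Real.dist_eq, sub_zero, abs_of_nonpos hlog] at this
      linarith
  refine ⟨key, ?_⟩
  rw [key, neg_neg, Real.exp_log w.im_pos]
end

section
/- For every w ∈ ℍ with −1/2 ≤ re w ≤ 1/2 and every integer n, dist(i, w) ≤ dist(i, w + n), where w + n denotes the point of ℍ with real part re w + n and imaginary part im w, and i ∈ ℍ is the point with re = 0 and im = 1. (That is, among all horizontal integer translates of a point, the one with real part in [−1/2, 1/2] is closest to i.) -/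
open scoped UpperHalfPlane
open UpperHalfPlane

/-- Among all horizontal integer translates of a point of `ℍ`, the one with real part in
`[-1/2, 1/2]` is closest to `i`. -/
theorem dist_I_le_dist_I_int_vadd (w : ℍ) (h₁ : -(1 / 2) ≤ w.re) (h₂ : w.re ≤ 1 / 2)
    (n : ℤ) :
    dist UpperHalfPlane.I w ≤ dist UpperHalfPlane.I ((n : ℝ) +ᵥ w) := by
  have him : ((n : ℝ) +ᵥ w).im = w.im := by simp
  rw [UpperHalfPlane.dist_eq, UpperHalfPlane.dist_eq, him]
  have key : dist (UpperHalfPlane.I : ℂ) w ≤ dist (UpperHalfPlane.I : ℂ) ((n : ℝ) +ᵥ w) := by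
    rw [Complex.dist_eq, Complex.dist_eq]
    have h1 : ‖(UpperHalfPlane.I : ℂ) - w‖ =
        Real.sqrt (w.re ^ 2 + (1 - w.im) ^ 2) := by
      rw [Complex.norm_def, Complex.normSq_apply]
      congr 1
      simp [UpperHalfPlane.coe_re, UpperHalfPlane.coe_im]
      ring
    have h2 : ‖(UpperHalfPlane.I : ℂ) - ((n : ℝ) +ᵥ w)‖ =
        Real.sqrt ((w.re + n) ^ 2 + (1 - w.im) ^ 2) := by
      rw [Complex.norm_def, Complex.normSq_apply]
      congr 1
      simp [UpperHalfPlane.coe_re, UpperHalfPlane.coe_im, UpperHalfPlane.coe_vadd]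
      ring
    rw [h1, h2]
    gcongr √(?_ + _)
    rcases eq_or_ne n 0 with rfl | hn
    · simp
    · have hn1 : (1 : ℝ) ≤ |(n : ℝ)| := by
        rw [← Int.cast_abs]
        exact_mod_cast Int.one_le_abs hn
      have : |w.re| ≤ 1 / 2 := abs_le.2 ⟨h₁, h₂⟩
      have : |w.re| ≤ |w.re + n| := by
        have h3 : |(n : ℝ)| ≤ |w.re + n| + |w.re| := by
          simpa using abs_add_le (w.re + (n : ℝ)) (-w.re)
        linarith
      calc w.re ^ 2 = |w.re| ^ 2 := (sq_abs _).symm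
        _ ≤ |w.re + n| ^ 2 := by gcongr
        _ = (w.re + n) ^ 2 := sq_abs _
  gcongr
end

section
/- (Hyperbolic ball packing.) Let z ∈ ℍ, ε > 0, R > 0, and let F be a finite set of points of ℍ such that the open hyperbolic balls Metric.ball p ε, for p ∈ F, are pairwise disjoint and each contained in Metric.ball z R. Then (Finset.card F) · (Real.sinh (ε/2))² ≤ (Real.sinh (R/2))². -/
open scoped UpperHalfPlane
open Complex MeasureTheory Metric Set Real
open scoped ENNReal NNReal

noncomputable def mulCLM (c : ℂ) : ℂ →L[ℝ] ℂ :=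
  (c • ContinuousLinearMap.id ℂ ℂ).restrictScalars ℝ

lemma mulCLM_apply (c v : ℂ) : mulCLM c v = c * v := rfl

lemma mulCLM_det (c : ℂ) : (mulCLM c).det = Complex.normSq c := by
  have : (mulCLM c).det = LinearMap.det ((mulCLM c) : ℂ →ₗ[ℝ] ℂ) := rfl
  rw [this, ← LinearMap.det_toMatrix Complex.basisOneI]
  rw [Matrix.det_fin_two]
  simp only [LinearMap.toMatrix_apply, Complex.coe_basisOneI, Complex.coe_basisOneI_repr,
    ContinuousLinearMap.coe_coe, mulCLM_apply, Complex.normSq_apply,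
    Matrix.cons_val_zero, Matrix.cons_val_one, Matrix.head_cons]
  simp


lemma hasDeriv_moebius {c : ℂ} (u : ℂ) (hu : u ≠ 1) :
    HasDerivAt (fun u : ℂ => c * ((1 + u) / (1 - u))) (c * (2 / (1 - u) ^ 2)) u := by
  have h1 : (1 : ℂ) - u ≠ 0 := sub_ne_zero.mpr (Ne.symm hu)
  have h := (((hasDerivAt_id u).const_add 1).div ((hasDerivAt_id u).const_sub 1) h1)
  have h2 : (1 * (1 - id u) - (1 + id u) * -1) / (1 - id u) ^ 2 = 2 / (1 - u) ^ 2 := by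
    simp only [id]
    field_simp
    ring
  rw [h2] at h
  exact (h.congr_deriv rfl).const_mul c

noncomputable def psi (x y : ℝ) (u : ℂ) : ℂ := (x : ℂ) + (y : ℂ) * Complex.I * ((1 + u) / (1 - u))

noncomputable def phi (x y : ℝ) (w : ℂ) : ℂ :=
  (w - ((x : ℂ) + (y : ℂ) * Complex.I)) / (w - ((x : ℂ) - (y : ℂ) * Complex.I))

lemma mem_ball_psi {x y r : ℝ} (hy : 0 < y) (hr : 0 < r) {u : ℂ} (hu : u ≠ 1) :
    psi x y u ∈ ball ((x : ℂ) + (y * Real.cosh r : ℝ) * Complex.I) (y * Real.sinh r) ↔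
      Complex.normSq u < (Real.cosh r - 1) / (Real.cosh r + 1) := by
  have hc : 1 < Real.cosh r := by
    rw [Real.one_lt_cosh]; exact hr.ne'
  have hs : 0 < Real.sinh r := Real.sinh_pos_iff.2 hr
  have hs2 : Real.sinh r ^ 2 = Real.cosh r ^ 2 - 1 := by
    have := Real.cosh_sq r; linarith
  have h1u : (1 : ℂ) - u ≠ 0 := sub_ne_zero.mpr (Ne.symm hu)
  have hN : 0 < Complex.normSq (1 - u) := Complex.normSq_pos.2 h1u
  rw [mem_ball, Complex.dist_eq, Complex.norm_def, Real.sqrt_lt' (by positivity)]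
  have key : psi x y u - ((x : ℂ) + (y * Real.cosh r : ℝ) * Complex.I) =
      (y : ℂ) * Complex.I * (((1 - (Real.cosh r : ℂ)) + u * (1 + (Real.cosh r : ℂ))) / (1 - u)) := by
    simp only [psi]
    push_cast
    field_simp
    ring
  rw [key, map_mul, map_mul, map_div₀, Complex.normSq_I, Complex.normSq_ofReal]
  rw [mul_one, ← mul_div_assoc, div_lt_iff₀ hN, lt_div_iff₀ (by linarith : (0:ℝ) < Real.cosh r + 1)]
  simp only [Complex.normSq_apply, Complex.add_re, Complex.add_im, Complex.sub_re,
    Complex.sub_im, Complex.mul_re, Complex.mul_im, Complex.one_re, Complex.one_im,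
    Complex.ofReal_re, Complex.ofReal_im]
  have trick : ∀ A B : ℝ, (y * y * A < y * y * B ↔ A < B) := fun A B =>
    mul_lt_mul_iff_right₀ (mul_pos hy hy)
  rw [show (y * Real.sinh r) ^ 2 * ((1 - u.re) * (1 - u.re) + (0 - u.im) * (0 - u.im)) =
      y * y * ((Real.cosh r ^ 2 - 1) * ((1 - u.re) * (1 - u.re) + (0 - u.im) * (0 - u.im)))
      from by rw [mul_pow, hs2]; ring]
  rw [trick]
  constructor <;> intro h <;> nlinarith [h]

lemma psi_phi {x y : ℝ} (hy : 0 < y) {w : ℂ} (hw : 0 < w.im) : psi x y (phi x y w) = w := by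
  have hy' : (y : ℂ) ≠ 0 := by exact_mod_cast hy.ne'
  have hden : w - ((x : ℂ) - (y : ℂ) * Complex.I) ≠ 0 := by
    intro h
    have h2 : w.im + y = 0 := by
      have := congrArg Complex.im h
      simpa using this
    linarith
  have h1 : (1 : ℂ) - phi x y w ≠ 0 := by
    rw [phi, sub_ne_zero]
    intro h
    have := (div_eq_one_iff_eq hden).mp h.symm
    have h2 := congrArg Complex.im this
    simp at h2
    linarith
  rw [psi, phi] at *
  field_simp at h1 ⊢
  ring

lemma phi_psi {x y : ℝ} (hy : 0 < y) {u : ℂ} (hu : u ≠ 1) : phi x y (psi x y u) = u := by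
  have h1u : (1 : ℂ) - u ≠ 0 := sub_ne_zero.mpr (Ne.symm hu)
  have hy' : (y : ℂ) ≠ 0 := by exact_mod_cast hy.ne'
  have hyI : (y : ℂ) * Complex.I ≠ 0 := mul_ne_zero hy' I_ne_zero
  have hden : (x : ℂ) + (y : ℂ) * Complex.I * ((1 + u) / (1 - u)) - ((x : ℂ) - (y : ℂ) * Complex.I) ≠ 0 := by
    intro h
    have h' : (y : ℂ) * Complex.I * ((1 + u) / (1 - u) + 1) = 0 := by linear_combination h
    have h'' : (1 + u) / (1 - u) + 1 = 0 := (mul_eq_zero.mp h').resolve_left hyI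
    rw [div_add' _ _ _ h1u, div_eq_zero_iff] at h''
    rcases h'' with h'' | h''
    · have : (2 : ℂ) = 0 := by linear_combination h''
      norm_num at this
    · exact h1u h''
  rw [phi, psi, div_eq_iff hden]
  field_simp
  ring

lemma tanh_sq_half {r : ℝ} :
    Real.tanh (r / 2) ^ 2 = (Real.cosh r - 1) / (Real.cosh r + 1) := by
  have hc2 : Real.cosh r = 2 * Real.cosh (r / 2) ^ 2 - 1 := by
    have h := Real.cosh_two_mul (r / 2)
    rw [show 2 * (r / 2) = r by ring] at h
    have := Real.cosh_sq (r / 2); linarith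
  have hs2 : Real.sinh (r / 2) ^ 2 = Real.cosh (r / 2) ^ 2 - 1 := by
    have := Real.cosh_sq (r / 2); linarith
  have hcpos : (0:ℝ) < Real.cosh (r / 2) := Real.cosh_pos _
  rw [Real.tanh_eq_sinh_div_cosh, div_pow, hs2, hc2]
  rw [div_eq_div_iff (by positivity) (by nlinarith)]
  ring

lemma mem_ball_zero_iff_normSq {u : ℂ} {t : ℝ} (ht : 0 < t) :
    u ∈ ball (0 : ℂ) t ↔ Complex.normSq u < t ^ 2 := by
  rw [mem_ball_zero_iff, Complex.norm_def, Real.sqrt_lt' ht]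

lemma image_psi {x y r : ℝ} (hy : 0 < y) (hr : 0 < r) :
    psi x y '' ball 0 (Real.tanh (r / 2)) =
      ball ((x : ℂ) + (y * Real.cosh r : ℝ) * Complex.I) (y * Real.sinh r) := by
  have ht : 0 < Real.tanh (r / 2) := by
    rw [Real.tanh_eq_sinh_div_cosh]
    exact div_pos (Real.sinh_pos_iff.2 (by linarith)) (Real.cosh_pos _)
  have ht1 : Real.tanh (r / 2) < 1 := by
    rw [Real.tanh_eq_sinh_div_cosh, div_lt_one (Real.cosh_pos _)]
    exact Real.sinh_lt_cosh _
  ext w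
  constructor
  · rintro ⟨u, hu, rfl⟩
    rw [mem_ball_zero_iff_normSq ht] at hu
    have hu1 : u ≠ 1 := by
      rintro rfl
      rw [Complex.normSq_one] at hu
      nlinarith
    rw [tanh_sq_half] at hu
    exact (mem_ball_psi hy hr hu1).mpr hu
  · intro hw
    have hd := mem_ball.mp hw
    rw [Complex.dist_eq] at hd
    have him0 : |w.im - y * Real.cosh r| < y * Real.sinh r := by
      refine lt_of_le_of_lt ?_ hd
      have := Complex.abs_im_le_norm (w - ((x : ℂ) + (y * Real.cosh r : ℝ) * Complex.I))
      simpa using this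
    have him : 0 < w.im := by
      have h1 := (abs_lt.mp him0).1
      nlinarith [Real.sinh_lt_cosh r]
    have hden : w - ((x : ℂ) - (y : ℂ) * Complex.I) ≠ 0 := by
      intro h
      have h2 : w.im + y = 0 := by
        have := congrArg Complex.im h
        simpa using this
      linarith
    have hphi1 : phi x y w ≠ 1 := by
      intro h
      rw [phi, div_eq_one_iff_eq hden] at h
      have h2 := congrArg Complex.im h
      simp at h2
      linarith
    refine ⟨phi x y w, ?_, psi_phi hy him⟩
    have hlt := (mem_ball_psi hy hr hphi1).mp (by rw [psi_phi hy him]; exact hw)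
    rw [mem_ball_zero_iff_normSq ht, tanh_sq_half]
    exact hlt

lemma integral_disc_radial {t : ℝ} (ht : 0 < t) (ht1 : t < 1) :
    ∫ y in Set.Ioo (0:ℝ) t, y * (4 * ((1 - y ^ 2) ^ 2)⁻¹) = 2 * t ^ 2 / (1 - t ^ 2) := by
  have hne : ∀ y ∈ Set.uIcc (0:ℝ) t, (1 : ℝ) - y ^ 2 ≠ 0 := by
    intro y hy
    rw [Set.uIcc_of_le ht.le] at hy
    have : y ^ 2 < 1 := by nlinarith [hy.1, hy.2]
    nlinarith
  have hderiv : ∀ y ∈ Set.uIcc (0:ℝ) t,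
      HasDerivAt (fun y : ℝ => 2 * ((1 - y ^ 2))⁻¹) (y * (4 * ((1 - y ^ 2) ^ 2)⁻¹)) y := by
    intro y hy
    have h1 : HasDerivAt (fun y : ℝ => 1 - y ^ 2) (-(2 * y)) y := by
      simpa using ((hasDerivAt_pow 2 y).const_sub 1)
    have h2 := (h1.inv (hne y hy)).const_mul (2:ℝ)
    refine h2.congr_deriv ?_
    ring
  have hcont : ContinuousOn (fun y : ℝ => y * (4 * ((1 - y ^ 2) ^ 2)⁻¹)) (Set.uIcc (0:ℝ) t) := by
    refine (continuousOn_id.mul (continuousOn_const.mul (ContinuousOn.inv₀ ?_ ?_)))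
    · fun_prop
    · intro y hy
      exact pow_ne_zero 2 (hne y hy)
  have := intervalIntegral.integral_eq_sub_of_hasDerivAt hderiv hcont.intervalIntegrable
  rw [← MeasureTheory.integral_Ioc_eq_integral_Ioo, ← intervalIntegral.integral_of_le ht.le, this]
  have h0 : (1:ℝ) - t ^ 2 ≠ 0 := by nlinarith
  field_simp
  ring

lemma lintegral_disc {t : ℝ} (ht : 0 < t) (ht1 : t < 1) :
    ∫⁻ u in ball (0:ℂ) t, ENNReal.ofReal (4 * ((1 - Complex.normSq u) ^ 2)⁻¹) =
      ENNReal.ofReal (4 * Real.pi * (t ^ 2 / (1 - t ^ 2))) := by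
  set g : ℂ → ℝ := fun u => 4 * ((1 - Complex.normSq u) ^ 2)⁻¹ with hg
  have hne : ∀ u ∈ closedBall (0:ℂ) t, (1 : ℝ) - Complex.normSq u ≠ 0 := by
    intro u hu
    rw [mem_closedBall_zero_iff] at hu
    have h1 : Complex.normSq u = ‖u‖ ^ 2 := by
      rw [Complex.sq_norm]
    have : Complex.normSq u < 1 := by rw [h1]; nlinarith [norm_nonneg u]
    linarith
  have hcont : ContinuousOn g (closedBall (0:ℂ) t) := by
    refine continuousOn_const.mul (ContinuousOn.inv₀
      (Continuous.continuousOn (by continuity)) ?_)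
    intro u hu
    exact pow_ne_zero 2 (hne u hu)
  have hint : IntegrableOn g (ball (0:ℂ) t) := by
    exact (hcont.integrableOn_compact (isCompact_closedBall _ _)).mono_set ball_subset_closedBall
  rw [← MeasureTheory.ofReal_integral_eq_lintegral_ofReal hint]
  swap
  · refine Filter.Eventually.of_forall fun u => ?_
    positivity
  congr 1
  have hind : ∀ x : ℂ, (fun y : ℝ => if y < t then 4 * ((1 - y ^ 2) ^ 2)⁻¹ else 0) ‖x‖ =
      Set.indicator (ball (0:ℂ) t) g x := by
    intro x
    by_cases h : ‖x‖ < t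
    · simp only [if_pos h, Set.indicator_of_mem (mem_ball_zero_iff.mpr h), hg]
      simp only [Complex.normSq_eq_norm_sq]
    · simp only [if_neg h, Set.indicator_of_notMem (fun hx => h (mem_ball_zero_iff.mp hx))]
  have hmain := MeasureTheory.integral_fun_norm_addHaar (volume : Measure ℂ)
    (fun y : ℝ => if y < t then 4 * ((1 - y ^ 2) ^ 2)⁻¹ else 0)
  rw [funext hind, MeasureTheory.integral_indicator measurableSet_ball] at hmain
  rw [hmain]
  have hioi : ∫ y in Set.Ioi (0:ℝ),
      y ^ (Module.finrank ℝ ℂ - 1) • (if y < t then 4 * ((1 - y ^ 2) ^ 2)⁻¹ else 0) =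
      ∫ y in Set.Ioo (0:ℝ) t, y * (4 * ((1 - y ^ 2) ^ 2)⁻¹) := by
    rw [← MeasureTheory.integral_indicator measurableSet_Ioi,
      ← MeasureTheory.integral_indicator measurableSet_Ioo]
    congr 1
    funext y
    rw [Set.indicator, Set.indicator]
    simp only [Complex.finrank_real_complex, smul_eq_mul, pow_one, Set.mem_Ioi, Set.mem_Ioo]
    split_ifs with h1 h2 h3 <;> first
      | rfl
      | (exfalso; first | exact h2 ⟨h1, ‹_›⟩ | tauto)
      | simp_all
  rw [hioi, integral_disc_radial ht ht1]
  simp only [Complex.finrank_real_complex, Complex.volume_ball, smul_eq_mul, nsmul_eq_mul]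
  rw [Measure.real, Complex.volume_ball, ENNReal.toReal_mul]
  norm_num
  ring

noncomputable def hMeasure : Measure ℂ :=
  volume.withDensity fun w => ENNReal.ofReal ((w.im)⁻¹ ^ 2)

lemma hasFDerivAt_mulCLM {f : ℂ → ℂ} {c u : ℂ} (h : HasDerivAt f c u) :
    HasFDerivAt f (mulCLM c) u := by
  have h2 := h.hasFDerivAt.restrictScalars ℝ
  refine h2.congr_fderiv ?_
  ext v
  simp [mulCLM_apply, mul_comm]

lemma psi_im (x : ℝ) {y : ℝ} (hy : 0 < y) {u : ℂ} (hu : u ≠ 1) :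
    (psi x y u).im = y * (1 - Complex.normSq u) / Complex.normSq (1 - u) := by
  have h1u : (1 : ℂ) - u ≠ 0 := sub_ne_zero.mpr (Ne.symm hu)
  have hN : Complex.normSq (1 - u) ≠ 0 := (Complex.normSq_pos.mpr h1u).ne'
  simp only [psi, Complex.add_im, Complex.ofReal_im, Complex.mul_im, Complex.mul_re,
    Complex.I_re, Complex.I_im, Complex.ofReal_re, Complex.div_re, Complex.div_im,
    Complex.add_re, Complex.one_re, Complex.one_im, Complex.sub_re, Complex.sub_im,
    Complex.normSq_apply]
  field_simp
  ring

lemma hMeasure_ball {x y r : ℝ} (hy : 0 < y) (hr : 0 < r) :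
    hMeasure (ball ((x : ℂ) + (y * Real.cosh r : ℝ) * Complex.I) (y * Real.sinh r)) =
      ENNReal.ofReal (4 * Real.pi * Real.sinh (r / 2) ^ 2) := by
  have ht : 0 < Real.tanh (r / 2) := by
    rw [Real.tanh_eq_sinh_div_cosh]
    exact div_pos (Real.sinh_pos_iff.2 (by linarith)) (Real.cosh_pos _)
  have ht1 : Real.tanh (r / 2) < 1 := by
    rw [Real.tanh_eq_sinh_div_cosh, div_lt_one (Real.cosh_pos _)]
    exact Real.sinh_lt_cosh _
  set t := Real.tanh (r / 2) with htdef
  have hy' : (y : ℂ) ≠ 0 := by exact_mod_cast hy.ne'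
  rw [hMeasure, withDensity_apply _ measurableSet_ball, ← image_psi hy hr]
  have hne1 : ∀ u ∈ ball (0:ℂ) t, u ≠ 1 := by
    intro u hu
    rw [mem_ball_zero_iff] at hu
    intro h
    rw [h] at hu
    simp at hu
    linarith
  have hf' : ∀ u ∈ ball (0:ℂ) t, HasFDerivWithinAt (psi x y)
      (mulCLM ((y : ℂ) * Complex.I * (2 / (1 - u) ^ 2))) (ball (0:ℂ) t) u := by
    intro u hu
    exact (hasFDerivAt_mulCLM
      (((hasDeriv_moebius u (hne1 u hu)).const_add (x : ℂ)))).hasFDerivWithinAt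
  have hinj : Set.InjOn (psi x y) (ball (0:ℂ) t) := by
    intro a ha b hb h
    have := congrArg (phi x y) h
    rwa [phi_psi hy (hne1 a ha), phi_psi hy (hne1 b hb)] at this
  rw [MeasureTheory.lintegral_image_eq_lintegral_abs_det_fderiv_mul volume
    measurableSet_ball hf' hinj]
  have hcongr : ∀ u ∈ ball (0:ℂ) t,
      ENNReal.ofReal |(mulCLM ((y : ℂ) * Complex.I * (2 / (1 - u) ^ 2))).det| *
        ENNReal.ofReal (((psi x y u).im)⁻¹ ^ 2) =
      ENNReal.ofReal (4 * ((1 - Complex.normSq u) ^ 2)⁻¹) := by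
    intro u hu
    have hu1 := hne1 u hu
    have h1u : (1 : ℂ) - u ≠ 0 := sub_ne_zero.mpr (Ne.symm hu1)
    have hN : 0 < Complex.normSq (1 - u) := Complex.normSq_pos.mpr h1u
    have hQ : Complex.normSq u < 1 := by
      rw [mem_ball_zero_iff] at hu
      have : Complex.normSq u = ‖u‖ ^ 2 := by rw [Complex.sq_norm]
      nlinarith [norm_nonneg u]
    rw [mulCLM_det, _root_.abs_of_nonneg (Complex.normSq_nonneg _),
      ← ENNReal.ofReal_mul (Complex.normSq_nonneg _)]
    congr 1
    rw [psi_im x hy hu1]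
    rw [map_mul, map_mul, map_div₀, map_pow]
    simp only [Complex.normSq_I, Complex.normSq_ofReal]
    have h2 : Complex.normSq 2 = 4 := by
      rw [Complex.normSq_apply]; norm_num
    rw [h2]
    have hQ' : (1:ℝ) - Complex.normSq u ≠ 0 := by linarith
    field_simp
  rw [MeasureTheory.setLIntegral_congr_fun measurableSet_ball
    hcongr, lintegral_disc ht ht1]
  congr 1
  have hc : 1 < Real.cosh r := by rw [Real.one_lt_cosh]; exact hr.ne'
  have hsq : Real.sinh (r / 2) ^ 2 = (Real.cosh r - 1) / 2 := by
    have h := Real.cosh_two_mul (r / 2)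
    rw [show 2 * (r / 2) = r by ring] at h
    have := Real.cosh_sq (r / 2)
    linarith
  have ht2 : t ^ 2 = (Real.cosh r - 1) / (Real.cosh r + 1) := tanh_sq_half
  have hcp : Real.cosh r + 1 ≠ 0 := by linarith
  rw [ht2, hsq, show (1 : ℝ) - (Real.cosh r - 1) / (Real.cosh r + 1) = 2 / (Real.cosh r + 1)
    from by field_simp; ring]
  have h3 : (Real.cosh r - 1) / (Real.cosh r + 1) / (2 / (Real.cosh r + 1)) =
      (Real.cosh r - 1) / 2 := by
    field_simp
  rw [h3]

lemma hMeasure_image_ball (z : ℍ) {r : ℝ} (hr : 0 < r) :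
    hMeasure (((↑) : ℍ → ℂ) '' ball z r) =
      ENNReal.ofReal (4 * Real.pi * Real.sinh (r / 2) ^ 2) := by
  rw [UpperHalfPlane.image_coe_ball]
  have hc : ((z.center r : ℍ) : ℂ) = (z.re : ℂ) + (z.im * Real.cosh r : ℝ) * Complex.I := by
    apply Complex.ext <;> simp
  rw [hc]
  exact hMeasure_ball z.im_pos hr


open UpperHalfPlane in
/-- Hyperbolic ball packing in `ℍ`: if finitely many pairwise disjoint open hyperbolic balls of
radius `ε` are contained in a ball of radius `R`, then
`(number of balls) · sinh²(ε/2) ≤ sinh²(R/2)`. -/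
theorem card_mul_sinh_sq_le_sinh_sq (z : ℍ) (ε R : ℝ) (hε : 0 < ε) (hR : 0 < R)
    (F : Finset ℍ)
    (hdisj : (F : Set ℍ).Pairwise fun p q => Disjoint (Metric.ball p ε) (Metric.ball q ε))
    (hsub : ∀ p ∈ F, Metric.ball p ε ⊆ Metric.ball z R) :
    (F.card : ℝ) * Real.sinh (ε / 2) ^ 2 ≤ Real.sinh (R / 2) ^ 2 := by
  have hinj : Function.Injective ((↑) : ℍ → ℂ) := fun a b h => UpperHalfPlane.ext h
  have hmeas : ∀ p ∈ F, MeasurableSet (((↑) : ℍ → ℂ) '' ball p ε) := by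
    intro p _
    rw [UpperHalfPlane.image_coe_ball]
    exact measurableSet_ball
  have hdisj' : (F : Set ℍ).PairwiseDisjoint fun p => ((↑) : ℍ → ℂ) '' ball p ε :=
    fun p hp q hq hpq => Set.disjoint_image_of_injective hinj (hdisj hp hq hpq)
  have hsum := MeasureTheory.measure_biUnion_finset (μ := hMeasure) hdisj' hmeas
  have hsub' : (⋃ p ∈ F, ((↑) : ℍ → ℂ) '' ball p ε) ⊆ ((↑) : ℍ → ℂ) '' ball z R := by
    refine Set.iUnion₂_subset fun p hp => Set.image_mono (hsub p hp)
  have hle := MeasureTheory.measure_mono (μ := hMeasure) hsub'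
  rw [hsum] at hle
  rw [hMeasure_image_ball z hR] at hle
  have heach : ∀ p ∈ F, hMeasure (((↑) : ℍ → ℂ) '' ball p ε) =
      ENNReal.ofReal (4 * Real.pi * Real.sinh (ε / 2) ^ 2) := fun p _ =>
    hMeasure_image_ball p hε
  rw [Finset.sum_congr rfl heach, Finset.sum_const, nsmul_eq_mul] at hle
  have hcast : (F.card : ℝ≥0∞) * ENNReal.ofReal (4 * Real.pi * Real.sinh (ε / 2) ^ 2) =
      ENNReal.ofReal ((F.card : ℝ) * (4 * Real.pi * Real.sinh (ε / 2) ^ 2)) := by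
    rw [← ENNReal.ofReal_natCast F.card, ← ENNReal.ofReal_mul (Nat.cast_nonneg _)]
  rw [hcast] at hle
  have hreal := (ENNReal.ofReal_le_ofReal_iff (by positivity)).mp hle
  nlinarith [Real.pi_pos, hreal, sq_nonneg (Real.sinh (ε / 2)), sq_nonneg (Real.sinh (R / 2)),
    Nat.cast_nonneg (α := ℝ) F.card]
end

section
/- (Proposition 2.2, part 1.) For every z ∈ ℍ and every t ≥ 0 one has the inclusions of sets of cosets A(z,t) ⊆ A(h,z,t) ⊆ A(z,t+1). In particular, whenever these sets are finite, Π(z,t) ≤ Π(h,z,t) ≤ Π(z,t+1). -/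
open scoped UpperHalfPlane MatrixGroups
open UpperHalfPlane

noncomputable section

/-- The parabolic element `T = [[1,1],[0,1]]` of `SL(2,ℝ)`, acting on `ℍ` by `z ↦ z + 1`. -/
def T : SL(2, ℝ) := ⟨!![1, 1; 0, 1], by norm_num [Matrix.det_fin_two_of]⟩

variable (Γ : Subgroup SL(2, ℝ))

/-- The cyclic subgroup `Γ∞` of `Γ` generated by `T`. -/
abbrev GammaInf (hT : T ∈ Γ) : Subgroup Γ := Subgroup.zpowers ⟨T, hT⟩

/-- The set of right cosets `Γ∞\Γ`. -/
abbrev Cosets (hT : T ∈ Γ) := Quotient (QuotientGroup.rightRel (GammaInf Γ hT))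

variable (hT : T ∈ Γ)

/-- The term `(im (δ·z))^s` of the Eisenstein series attached to a coset `q ∈ Γ∞\Γ`
(`δ` a representative of `q`; the value is independent of the representative). -/
def eisTerm (z : ℍ) (s : ℝ) (q : Cosets Γ hT) : ℝ :=
  (((Quotient.out q : Γ) : SL(2, ℝ)) • z).im ^ s

/-- The Eisenstein series `E(z,s) = ∑'_{q ∈ Γ∞\Γ} (im (δ·z))^s`. -/
def Eis (z : ℍ) (s : ℝ) : ℝ := ∑' q : Cosets Γ hT, eisTerm Γ hT z s q

/-- `A(z,t)`: the set of cosets `q ∈ Γ∞\Γ` admitting a representative `δ` with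
`dist(i, δ·z) ≤ t`. -/
def Aset (z : ℍ) (t : ℝ) : Set (Cosets Γ hT) :=
  {q | ∃ δ : Γ, Quotient.mk (QuotientGroup.rightRel (GammaInf Γ hT)) δ = q ∧
    dist UpperHalfPlane.I ((δ : SL(2, ℝ)) • z) ≤ t}

/-- `A(h,z,t)`: the set of cosets `q ∈ Γ∞\Γ` admitting a representative `δ` with
`-1/2 ≤ re(δ·z) < 1/2` and `infDist (δ·z) h ≤ t`. -/
def Ahset (z : ℍ) (t : ℝ) : Set (Cosets Γ hT) :=
  {q | ∃ δ : Γ, Quotient.mk (QuotientGroup.rightRel (GammaInf Γ hT)) δ = q ∧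
    -(1 / 2) ≤ ((δ : SL(2, ℝ)) • z).re ∧ ((δ : SL(2, ℝ)) • z).re < 1 / 2 ∧
    Metric.infDist ((δ : SL(2, ℝ)) • z) horocycle ≤ t}

lemma T_smul (w : ℍ) : T • w = (1:ℝ) +ᵥ w := by
  rw [UpperHalfPlane.ext_iff, coe_vadd, add_comm, UpperHalfPlane.specialLinearGroup_apply, coe_mk]
  simp [T]

lemma T_inv_smul (w : ℍ) : (T⁻¹ : SL(2,ℝ)) • w = (-1 : ℝ) +ᵥ w := by
  rw [inv_smul_eq_iff, T_smul, ← add_vadd]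
  norm_num

lemma T_zpow_smul (n : ℤ) (w : ℍ) : (T ^ n) • w = (n : ℝ) +ᵥ w := by
  induction n using Int.induction_on generalizing w with
  | zero => simp
  | succ k ih =>
      rw [zpow_add_one, mul_smul, T_smul, ih, ← add_vadd]
      push_cast; ring_nf
  | pred k ih =>
      rw [zpow_sub_one, mul_smul, T_inv_smul, ih, ← add_vadd]
      push_cast; ring_nf

lemma I_mem_horocycle : UpperHalfPlane.I ∈ horocycle := by
  refine ⟨?_, ?_, I_im⟩ <;> rw [I_re] <;> norm_num

lemma arsinh_quarter_le : Real.arsinh (1/4) ≤ 1/2 := by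
  have h1 : (1/2 : ℝ) ≤ Real.sinh (1/2) := Real.self_le_sinh_iff.2 (by norm_num)
  calc Real.arsinh (1/4) ≤ Real.arsinh (Real.sinh (1/2)) :=
        Real.arsinh_le_arsinh.2 (by linarith)
    _ = 1/2 := Real.arsinh_sinh _

lemma dist_I_horocycle {p : ℍ} (hp : p ∈ horocycle) : dist UpperHalfPlane.I p ≤ 1 := by
  obtain ⟨h1, h2, h3⟩ := hp
  rw [UpperHalfPlane.dist_eq]
  have him : ((UpperHalfPlane.I : ℍ) : ℂ).im = (p : ℂ).im := by
    rw [coe_im, coe_im, I_im, h3]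
  rw [Complex.dist_of_im_eq him]
  have hre : dist ((UpperHalfPlane.I : ℍ) : ℂ).re ((p:ℂ)).re ≤ 1/2 := by
    rw [coe_re, coe_re, I_re, Real.dist_eq]
    rw [abs_sub_comm, abs_sub_le_iff]
    constructor <;> linarith
  have hd : I.im * p.im = 1 := by rw [I_im, h3]; norm_num
  rw [hd, Real.sqrt_one, mul_one]
  have : Real.arsinh (dist ((UpperHalfPlane.I : ℍ) : ℂ).re ((p:ℂ)).re / 2) ≤ 1/2 := by
    refine le_trans (Real.arsinh_le_arsinh.2 ?_) arsinh_quarter_le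
    linarith
  linarith

lemma coset_eq (δ : Γ) (n : ℤ) :
    Quotient.mk (QuotientGroup.rightRel (GammaInf Γ hT)) ((⟨T, hT⟩ : Γ) ^ n * δ) =
    Quotient.mk (QuotientGroup.rightRel (GammaInf Γ hT)) δ := by
  apply Quotient.sound
  apply QuotientGroup.rightRel_apply.mpr
  have : δ * ((⟨T, hT⟩ : Γ) ^ n * δ)⁻¹ = (⟨T, hT⟩ : Γ) ^ (-n) := by group
  rw [this]
  exact Subgroup.zpow_mem _ (Subgroup.mem_zpowers _) _

/-- Proposition 2.2, part 1: `A(z,t) ⊆ A(h,z,t) ⊆ A(z,t+1)`; in particular, whenever these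
sets are finite, `Π(z,t) ≤ Π(h,z,t) ≤ Π(z,t+1)`. -/
theorem Aset_subset_Ahset_subset (z : ℍ) (t : ℝ) (ht : 0 ≤ t) :
    Aset Γ hT z t ⊆ Ahset Γ hT z t ∧ Ahset Γ hT z t ⊆ Aset Γ hT z (t + 1) ∧
      ((Aset Γ hT z t).Finite → (Ahset Γ hT z t).Finite → (Aset Γ hT z (t + 1)).Finite →
        (Aset Γ hT z t).ncard ≤ (Ahset Γ hT z t).ncard ∧
          (Ahset Γ hT z t).ncard ≤ (Aset Γ hT z (t + 1)).ncard) := by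
  have sub1 : Aset Γ hT z t ⊆ Ahset Γ hT z t := by
    rintro q ⟨δ, hδq, hd⟩
    set w : ℍ := (δ : SL(2,ℝ)) • z with hw
    set n : ℤ := -⌊w.re + 1/2⌋ with hn
    refine ⟨(⟨T, hT⟩ : Γ) ^ n * δ, by rw [coset_eq]; exact hδq, ?_⟩
    have hcoe : (((⟨T, hT⟩ : Γ) ^ n * δ : Γ) : SL(2,ℝ)) • z = (T ^ n) • w := by
      rw [hw, ← mul_smul]
      norm_cast
    rw [hcoe, T_zpow_smul]
    have hfl : (⌊w.re + 1/2⌋ : ℝ) ≤ w.re + 1/2 := Int.floor_le _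
    have hfl2 : w.re + 1/2 < (⌊w.re + 1/2⌋ : ℝ) + 1 := Int.lt_floor_add_one _
    have hre : ((n:ℝ) +ᵥ w).re = (n : ℝ) + w.re := vadd_re _ _
    have hn' : (n : ℝ) = -(⌊w.re + 1/2⌋ : ℝ) := by rw [hn]; push_cast; ring
    refine ⟨by rw [hre, hn']; linarith, by rw [hre, hn']; linarith, ?_⟩
    -- set up closest point on the horocycle
    set w' : ℍ := (n:ℝ) +ᵥ w with hw'
    have hre' : -(1/2) ≤ w'.re ∧ w'.re < 1/2 := by
      constructor <;> rw [hw', hre, hn'] <;> linarith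
    set p : ℍ := UpperHalfPlane.mk ⟨w'.re, 1⟩ (by norm_num) with hp
    have hpmem : p ∈ horocycle := ⟨hre'.1, hre'.2, rfl⟩
    refine le_trans (Metric.infDist_le_dist_of_mem hpmem) (le_trans ?_ hd)
    -- dist w' p ≤ dist I w
    rw [UpperHalfPlane.dist_eq, UpperHalfPlane.dist_eq]
    have him' : w'.im = w.im := vadd_im _ _
    have h1 : dist (w' : ℂ) (p : ℂ) = |w'.im - 1| := by
      rw [Complex.dist_of_re_eq (by rw [coe_re, coe_re]; rfl), Real.dist_eq]
      rfl
    have h2 : |w'.im - 1| ≤ dist ((UpperHalfPlane.I : ℍ) : ℂ) (w : ℂ) := by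
      rw [Complex.dist_eq_re_im]
      have : |w'.im - 1| = Real.sqrt ((w'.im - 1)^2) := (Real.sqrt_sq_eq_abs _).symm
      rw [this]
      apply Real.sqrt_le_sqrt
      have : ((UpperHalfPlane.I : ℍ) : ℂ).im - (w : ℂ).im = -(w'.im - 1) := by
        rw [coe_im, coe_im, I_im, him']; ring
      rw [this]
      have hsq : (-(w'.im - 1))^2 = (w'.im - 1)^2 := by ring
      rw [hsq]
      nlinarith [sq_nonneg (((UpperHalfPlane.I : ℍ) : ℂ).re - (w : ℂ).re)]
    have hdenom : w'.im * p.im = I.im * w.im := by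
      rw [him', I_im]
      have : p.im = 1 := rfl
      rw [this]; ring
    rw [hdenom, h1]
    have hden_pos : 0 < Real.sqrt (I.im * w.im) := by
      apply Real.sqrt_pos.2
      rw [I_im]; simpa using w.im_pos
    gcongr
  have sub2 : Ahset Γ hT z t ⊆ Aset Γ hT z (t + 1) := by
    rintro q ⟨δ, hδq, _, _, hd⟩
    refine ⟨δ, hδq, ?_⟩
    set w : ℍ := (δ : SL(2,ℝ)) • z with hw
    by_contra hc
    push_neg at hc
    have hlt : Metric.infDist w horocycle < dist UpperHalfPlane.I w - 1 := by linarith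
    obtain ⟨p, hpmem, hpd⟩ := (Metric.infDist_lt_iff ⟨_, I_mem_horocycle⟩).1 hlt
    have := dist_triangle UpperHalfPlane.I p w
    have h1 : dist UpperHalfPlane.I p ≤ 1 := dist_I_horocycle hpmem
    rw [dist_comm p w] at this
    linarith
  exact ⟨sub1, sub2, fun _ h2 h3 =>
    ⟨Set.ncard_le_ncard sub1 h2, Set.ncard_le_ncard sub2 h3⟩⟩
end
end
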